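/- arXiv:2407.20008 — 2 statements merged into one kernel-verified Lean document; each statement's English description precedes it below -/
import Mathlib

section
/- For every positive integer m, the poset L(m,2) admits a symmetric chain decomposition: there is a partition of the underlying set of L(m,2) into saturated chains such that each chain, with minimum element x and maximum element y, satisfies |x| + |y| = 2m. -/
/-- The finite Young lattice `L(m,n)`. -/
def YoungL (m n : ℕ) := {f : Fin m → ℕ // Antitone f ∧ ∀ i, f i ≤ n}

instance (m n : ℕ) : PartialOrder (YoungL m n) :=
  Subtype.partialOrder _

namespace YoungSCD

lemma le_def {m : ℕ} (x y : YoungL m 2) : x ≤ y ↔ ∀ i, x.1 i ≤ y.1 i := Iff.rfl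

/-- The element of `L(m,2)` with `b` parts equal to 2 and `a - b` parts equal to 1. -/
def P (m a b : ℕ) : YoungL m 2 :=
  ⟨fun i => if (i : ℕ) < b then 2 else if (i : ℕ) < a then 1 else 0, by
    intro i j hij
    have h : (i : ℕ) ≤ (j : ℕ) := hij
    dsimp only
    split_ifs <;> omega, by
    intro i; dsimp only; split_ifs <;> omega⟩

lemma P_apply (m a b : ℕ) (i : Fin m) :
    (P m a b).1 i = if (i : ℕ) < b then 2 else if (i : ℕ) < a then 1 else 0 := rfl

lemma sum_if_lt (m a : ℕ) (h : a ≤ m) :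
    (∑ i ∈ Finset.range m, if i < a then (1 : ℕ) else 0) = a := by
  induction m with
  | zero => simp; omega
  | succ n ih =>
    rw [Finset.sum_range_succ]
    rcases Nat.lt_or_ge n a with hn | hn
    · have ha : a = n + 1 := by omega
      have : (∑ i ∈ Finset.range n, if i < a then (1 : ℕ) else 0)
          = ∑ _i ∈ Finset.range n, (1 : ℕ) := by
        apply Finset.sum_congr rfl
        intro i hi
        simp only [Finset.mem_range] at hi
        simp [show i < a by omega]
      rw [this]
      simp [ha, if_pos (by omega : n < a)]
    · rw [ih (by omega), if_neg (by omega)]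
      omega

lemma sum_P (m a b : ℕ) (hba : b ≤ a) (ham : a ≤ m) :
    ∑ i, (P m a b).1 i = a + b := by
  have : ∀ i : Fin m, (P m a b).1 i
      = (if (i : ℕ) < a then 1 else 0) + (if (i : ℕ) < b then 1 else 0) := by
    intro i
    rw [P_apply]
    split_ifs <;> omega
  rw [Finset.sum_congr rfl fun i _ => this i, Finset.sum_add_distrib]
  rw [Fin.sum_univ_eq_sum_range (fun i => if i < a then (1:ℕ) else 0),
    Fin.sum_univ_eq_sum_range (fun i => if i < b then (1:ℕ) else 0),
    sum_if_lt m a ham, sum_if_lt m b (le_trans hba ham)]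

lemma P_le_P (m : ℕ) {a b a' b' : ℕ} (ha : a ≤ a') (hb : b ≤ b') :
    P m a b ≤ P m a' b' := by
  rw [le_def]
  intro i
  rw [P_apply, P_apply]
  split_ifs <;> omega

lemma P_inj {m a b a' b' : ℕ} (hba : b ≤ a) (ham : a ≤ m) (hba' : b' ≤ a')
    (ham' : a' ≤ m) (h : P m a b = P m a' b') : a = a' ∧ b = b' := by
  have hf : ∀ i : Fin m,
      (if (i : ℕ) < b then 2 else if (i : ℕ) < a then 1 else 0)
      = (if (i : ℕ) < b' then 2 else if (i : ℕ) < a' then 1 else 0) := by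
    intro i
    have := congrArg (fun z : YoungL m 2 => z.1 i) h
    simpa [P_apply] using this
  have haa : a = a' := by
    by_contra hne
    rcases Nat.lt_or_ge a a' with hlt | hge
    · have := hf ⟨a, by omega⟩
      simp only at this
      split_ifs at this <;> omega
    · have hlt : a' < a := by omega
      have := hf ⟨a', by omega⟩
      simp only at this
      split_ifs at this <;> omega
  refine ⟨haa, ?_⟩
  by_contra hne
  rcases Nat.lt_or_ge b b' with hlt | hge
  · have := hf ⟨b, by omega⟩
    simp only at this
    split_ifs at this <;> omega
  · have hlt : b' < b := by omega
    have := hf ⟨b', by omega⟩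
    simp only at this
    split_ifs at this <;> omega

lemma sum_lt_sum {m : ℕ} {x y : YoungL m 2} (h : x < y) :
    ∑ i, x.1 i < ∑ i, y.1 i := by
  obtain ⟨hle, hne⟩ := lt_iff_le_and_ne.mp h
  have hle' := (le_def x y).mp hle
  have : x.1 ≠ y.1 := fun hc => hne (Subtype.ext hc)
  obtain ⟨i, hi⟩ := Function.ne_iff.mp this
  exact Finset.sum_lt_sum (fun j _ => hle' j)
    ⟨i, Finset.mem_univ i, lt_of_le_of_ne (hle' i) hi⟩

lemma covby_of_sum {m : ℕ} {x y : YoungL m 2} (hle : x ≤ y)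
    (hsum : ∑ i, y.1 i = (∑ i, x.1 i) + 1) : x ⋖ y := by
  have hlt : x < y := by
    refine lt_of_le_of_ne hle fun hc => ?_
    rw [hc] at hsum
    omega
  refine ⟨hlt, fun c hxc hcy => ?_⟩
  have h1 := sum_lt_sum hxc
  have h2 := sum_lt_sum hcy
  omega

lemma antitone_filter {m : ℕ} (f : Fin m → ℕ) (hf : Antitone f) (c : ℕ) (i : Fin m) :
    c ≤ f i ↔ (i : ℕ) < (Finset.univ.filter fun j => c ≤ f j).card := by
  set t := Finset.univ.filter fun j => c ≤ f j with ht
  constructor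
  · intro h
    have hsub : Finset.Iic i ⊆ t := by
      intro j hj
      rw [ht, Finset.mem_filter]
      exact ⟨Finset.mem_univ j, le_trans h (hf (Finset.mem_Iic.mp hj))⟩
    have := Finset.card_le_card hsub
    rw [Fin.card_Iic] at this
    omega
  · intro h
    by_contra hc
    have hsub : t ⊆ Finset.Iio i := by
      intro j hj
      rw [ht, Finset.mem_filter] at hj
      rw [Finset.mem_Iio]
      by_contra hji
      exact hc (le_trans hj.2 (hf (le_of_not_gt hji)))
    have := Finset.card_le_card hsub
    rw [Fin.card_Iio] at this
    omega

lemma exists_rep {m : ℕ} (x : YoungL m 2) :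
    ∃ a b, b ≤ a ∧ a ≤ m ∧ x = P m a b := by
  refine ⟨(Finset.univ.filter fun j => 1 ≤ x.1 j).card,
    (Finset.univ.filter fun j => 2 ≤ x.1 j).card, ?_, ?_, ?_⟩
  · apply Finset.card_le_card
    intro j hj
    simp only [Finset.mem_filter] at hj ⊢
    exact ⟨hj.1, by omega⟩
  · calc (Finset.univ.filter fun j => 1 ≤ x.1 j).card
        ≤ (Finset.univ : Finset (Fin m)).card := Finset.card_le_card (Finset.filter_subset _ _)
      _ = m := by simp
  · apply Subtype.ext
    funext i
    have h1 := antitone_filter x.1 x.2.1 1 i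
    have h2 := antitone_filter x.1 x.2.1 2 i
    have hb := x.2.2 i
    rw [P_apply]
    split_ifs <;> omega

/-- The `j`-th element of the `k`-th symmetric chain. -/
def g (m k j : ℕ) : YoungL m 2 :=
  if j ≤ m - 2 * k then P m (k + j) k else P m (m - k) (k + (j - (m - 2 * k)))

/-- The `k`-th symmetric chain, for `2 * k ≤ m`. -/
def C (m k : ℕ) : List (YoungL m 2) :=
  (List.range (2 * (m - 2 * k) + 1)).map (g m k)

lemma g_eq_P (m k j : ℕ) (hk : 2 * k ≤ m) (hj : j ≤ 2 * (m - 2 * k)) :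
    ∃ a b, b ≤ a ∧ a ≤ m ∧ g m k j = P m a b ∧ a + b = 2 * k + j ∧
      ((j ≤ m - 2 * k ∧ a = k + j ∧ b = k) ∨
       (m - 2 * k < j ∧ a = m - k ∧ b = k + (j - (m - 2 * k)))) := by
  unfold g
  split_ifs with h
  · exact ⟨k + j, k, by omega, by omega, rfl, by omega, Or.inl ⟨h, rfl, rfl⟩⟩
  · exact ⟨m - k, k + (j - (m - 2 * k)), by omega, by omega, rfl, by omega,
      Or.inr ⟨by omega, rfl, rfl⟩⟩

lemma sum_g (m k j : ℕ) (hk : 2 * k ≤ m) (hj : j ≤ 2 * (m - 2 * k)) :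
    ∑ i, (g m k j).1 i = 2 * k + j := by
  obtain ⟨a, b, hba, ham, heq, hsum, -⟩ := g_eq_P m k j hk hj
  rw [heq, sum_P m a b hba ham, hsum]

lemma g_covby (m k j : ℕ) (hk : 2 * k ≤ m) (hj : j + 1 ≤ 2 * (m - 2 * k)) :
    g m k j ⋖ g m k (j + 1) := by
  apply covby_of_sum
  · unfold g
    split_ifs with h1 h2 h2 <;>
      [skip; skip; omega; skip] <;> exact P_le_P m (by omega) (by omega)
  · rw [sum_g m k j hk (by omega), sum_g m k (j + 1) hk hj]
    omega

lemma mem_C_iff {m k : ℕ} (x : YoungL m 2) :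
    x ∈ C m k ↔ ∃ j ≤ 2 * (m - 2 * k), g m k j = x := by
  unfold C
  simp only [List.mem_map, List.mem_range]
  constructor
  · rintro ⟨j, hj, rfl⟩; exact ⟨j, by omega, rfl⟩
  · rintro ⟨j, hj, rfl⟩; exact ⟨j, by omega, rfl⟩

lemma g_inj {m k j k' j' : ℕ} (hk : 2 * k ≤ m) (hj : j ≤ 2 * (m - 2 * k))
    (hk' : 2 * k' ≤ m) (hj' : j' ≤ 2 * (m - 2 * k'))
    (h : g m k j = g m k' j') : k = k' ∧ j = j' := by
  obtain ⟨a, b, hba, ham, heq, hsum, hcase⟩ := g_eq_P m k j hk hj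
  obtain ⟨a', b', hba', ham', heq', hsum', hcase'⟩ := g_eq_P m k' j' hk' hj'
  rw [heq, heq'] at h
  obtain ⟨ea, eb⟩ := P_inj hba ham hba' ham' h
  rcases hcase with ⟨h1, ha, hb⟩ | ⟨h1, ha, hb⟩ <;>
    rcases hcase' with ⟨h1', ha', hb'⟩ | ⟨h1', ha', hb'⟩ <;> omega

end YoungSCD

open YoungSCD in
/-- `L(m,2)` admits a symmetric chain decomposition: there is a set `S` of
saturated chains (nonempty lists linked by the covering relation) whose minimum
and maximum elements `x, y` satisfy `|x| + |y| = 2m`, such that every element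
of `L(m,2)` belongs to exactly one chain of `S`. -/
theorem youngL_m_two_symmetric_chain_decomposition (m : ℕ) (hm : 0 < m) :
    ∃ S : Set (List (YoungL m 2)),
      (∀ l ∈ S, ∃ hl : l ≠ [],
        l.Chain' (· ⋖ ·) ∧
        (∑ i, (l.head hl).1 i) + (∑ i, (l.getLast hl).1 i) = m * 2) ∧
      ∀ x : YoungL m 2, ∃! l, l ∈ S ∧ x ∈ l := by
  refine ⟨{l | ∃ k, 2 * k ≤ m ∧ l = C m k}, ?_, ?_⟩
  · rintro l ⟨k, hk, rfl⟩
    have hlen : (C m k).length = 2 * (m - 2 * k) + 1 := by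
      simp [C]
    have hne : C m k ≠ [] := by
      intro hc
      rw [hc] at hlen
      simp at hlen
    refine ⟨hne, ?_, ?_⟩
    · unfold C
      show List.IsChain _ _
      rw [List.isChain_map, List.isChain_range_succ]
      intro j hj
      exact g_covby m k j hk (by omega)
    · have hhead : (C m k).head hne = g m k 0 := by
        rw [List.head_eq_getElem]
        unfold C
        simp
      have hlast : (C m k).getLast hne = g m k (2 * (m - 2 * k)) := by
        rw [List.getLast_eq_getElem]
        unfold C
        simp only [List.getElem_map, List.getElem_range]
        congr 1
        simp [C] at hlen ⊢
      rw [hhead, hlast, sum_g m k 0 hk (by omega),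
        sum_g m k (2 * (m - 2 * k)) hk le_rfl]
      omega
  · intro x
    obtain ⟨a, b, hba, ham, rfl⟩ := exists_rep x
    rcases le_or_gt (a + b) m with hab | hab
    · -- row chain: k = b, j = a - b
      have hk : 2 * b ≤ m := by omega
      refine ⟨C m b, ⟨⟨b, hk, rfl⟩, ?_⟩, ?_⟩
      · rw [mem_C_iff]
        refine ⟨a - b, by omega, ?_⟩
        unfold g
        rw [if_pos (by omega)]
        congr 1 <;> omega
      · rintro l ⟨⟨k', hk', rfl⟩, hmem⟩
        rw [mem_C_iff] at hmem
        obtain ⟨j', hj', hgj⟩ := hmem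
        have hrow : g m b (a - b) = P m a b := by
          unfold g
          rw [if_pos (by omega)]
          congr 1 <;> omega
        have := g_inj hk' hj' hk (by omega : a - b ≤ 2 * (m - 2 * b))
          (hgj.trans hrow.symm)
        rw [this.1]
    · -- column chain: k = m - a, j = (m - 2*k) + (b - k)
      have hk : 2 * (m - a) ≤ m := by omega
      have hdef : g m (m - a) ((m - 2 * (m - a)) + (b - (m - a))) = P m a b := by
        unfold g
        rw [if_neg (by omega)]
        congr 1 <;> omega
      refine ⟨C m (m - a), ⟨⟨m - a, hk, rfl⟩, ?_⟩, ?_⟩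
      · rw [mem_C_iff]
        exact ⟨_, by omega, hdef⟩
      · rintro l ⟨⟨k', hk', rfl⟩, hmem⟩
        rw [mem_C_iff] at hmem
        obtain ⟨j', hj', hgj⟩ := hmem
        have := g_inj hk' hj' hk (by omega) (hgj.trans hdef.symm)
        rw [this.1]
end

section
/- (Lindström) For every positive integer n, the poset L(3,n) admits a symmetric chain decomposition: there is a partition of the underlying set of L(3,n) into saturated chains such that each chain, with minimum element x and maximum element y, satisfies |x| + |y| = 3n. -/
namespace YL3


def pa (j m k : ℕ) : ℕ := m + (k - (m - 4*j) + 2)/3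
def pb (j m k : ℕ) : ℕ :=
  if (m - 4*j) % 2 = 0 then j + min k (m - 4*j) + (k - (m - 4*j) + 1)/3
  else j + min k (m - 4*j - 2) + (k + 1 - (m - 4*j) + 2)/3
def pc (j m k : ℕ) : ℕ :=
  if (m - 4*j) % 2 = 0 then j + (k - (m - 4*j))/3
  else j + (k - (m - 4*j - 2) + 2)/3
def cl (n j m : ℕ) : ℕ := (m - 4*j) + 3*(n - m)
def Valid (n j m : ℕ) : Prop := 4*j ≤ m ∧ m ≤ n ∧ m ≠ 4*j + 1

lemma pos_valid {n j m k : ℕ} (h : Valid n j m) (hk : k ≤ cl n j m) :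
    pc j m k ≤ pb j m k ∧ pb j m k ≤ pa j m k ∧ pa j m k ≤ n := by
  obtain ⟨h1, h2, h3⟩ := h
  unfold pa pb pc cl at *
  split_ifs <;> omega

lemma pos_cover {n j m k : ℕ} (h : Valid n j m) (hk : k + 1 ≤ cl n j m) :
    pa j m k ≤ pa j m (k+1) ∧ pb j m k ≤ pb j m (k+1) ∧ pc j m k ≤ pc j m (k+1) ∧
    pa j m (k+1) + pb j m (k+1) + pc j m (k+1) = pa j m k + pb j m k + pc j m k + 1 := by
  obtain ⟨h1, h2, h3⟩ := h
  unfold pa pb pc cl at *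
  split_ifs <;> omega

lemma pos_sym {n j m : ℕ} (h : Valid n j m) :
    pa j m 0 + pb j m 0 + pc j m 0
      + (pa j m (cl n j m) + pb j m (cl n j m) + pc j m (cl n j m)) = 3*n := by
  obtain ⟨h1, h2, h3⟩ := h
  unfold pa pb pc cl at *
  split_ifs <;> omega

def Desc (n j m k a b c : ℕ) : Prop :=
  ((m-4*j) % 2 = 0 ∧
    ((k ≤ m-4*j ∧ a = m ∧ b = j + k ∧ c = j) ∨
     (∃ i, k = (m-4*j)+3*i+1 ∧ i < n-m ∧ a = m+i+1 ∧ b = j+(m-4*j)+i ∧ c = j+i) ∨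
     (∃ i, k = (m-4*j)+3*i+2 ∧ i < n-m ∧ a = m+i+1 ∧ b = j+(m-4*j)+i+1 ∧ c = j+i) ∨
     (∃ i, k = (m-4*j)+3*i+3 ∧ i < n-m ∧ a = m+i+1 ∧ b = j+(m-4*j)+i+1 ∧ c = j+i+1))) ∨
  ((m-4*j) % 2 = 1 ∧ 3 ≤ m - 4*j ∧
    ((k ≤ m-4*j-2 ∧ a = m ∧ b = j + k ∧ c = j) ∨
     (k = m-4*j-1 ∧ a = m ∧ b = j+(m-4*j)-2 ∧ c = j+1) ∨
     (∃ i, k = (m-4*j)+3*i ∧ i ≤ n-m ∧ a = m+i ∧ b = j+(m-4*j)-1+i ∧ c = j+1+i) ∨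
     (∃ i, k = (m-4*j)+3*i+1 ∧ i < n-m ∧ a = m+i+1 ∧ b = j+(m-4*j)-1+i ∧ c = j+1+i) ∨
     (∃ i, k = (m-4*j)+3*i+2 ∧ i < n-m ∧ a = m+i+1 ∧ b = j+(m-4*j)-1+i ∧ c = j+2+i)))

lemma pos_desc {n j m k : ℕ} (h : Valid n j m) (hk : k ≤ cl n j m) :
    Desc n j m k (pa j m k) (pb j m k) (pc j m k) := by
  obtain ⟨h1, h2, h3⟩ := h
  unfold cl at hk
  unfold Desc
  rcases Nat.even_or_odd (m - 4*j) with hp | hp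
  · rw [Nat.even_iff] at hp
    left
    refine ⟨hp, ?_⟩
    rcases le_or_gt k (m - 4*j) with hks | hks
    · exact Or.inl ⟨hks, by unfold pa pb pc; split_ifs <;> omega⟩
    · obtain ⟨i, r, hr3, hd⟩ : ∃ i r, r < 3 ∧ k - (m-4*j) - 1 = 3*i + r :=
        ⟨_/3, _%3, Nat.mod_lt _ (by norm_num), (Nat.div_add_mod _ 3).symm⟩
      interval_cases r
      · exact Or.inr (Or.inl ⟨i, by omega, by omega, by unfold pa pb pc; split_ifs <;> omega⟩)
      · exact Or.inr (Or.inr (Or.inl ⟨i, by omega, by omega,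
          by unfold pa pb pc; split_ifs <;> omega⟩))
      · exact Or.inr (Or.inr (Or.inr ⟨i, by omega, by omega,
          by unfold pa pb pc; split_ifs <;> omega⟩))
  · rw [Nat.odd_iff] at hp
    right
    refine ⟨hp, by omega, ?_⟩
    rcases le_or_gt k (m - 4*j - 2) with hks | hks
    · exact Or.inl ⟨hks, by unfold pa pb pc; split_ifs <;> omega⟩
    · rcases le_or_gt k (m - 4*j - 1) with hks2 | hks2
      · exact Or.inr (Or.inl ⟨by omega, by unfold pa pb pc; split_ifs <;> omega⟩)
      · obtain ⟨i, r, hr3, hd⟩ : ∃ i r, r < 3 ∧ k - (m-4*j) = 3*i + r :=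
          ⟨_/3, _%3, Nat.mod_lt _ (by norm_num), (Nat.div_add_mod _ 3).symm⟩
        interval_cases r
        · exact Or.inr (Or.inr (Or.inl ⟨i, by omega, by omega,
            by unfold pa pb pc; split_ifs <;> omega⟩))
        · exact Or.inr (Or.inr (Or.inr (Or.inl ⟨i, by omega, by omega,
            by unfold pa pb pc; split_ifs <;> omega⟩)))
        · exact Or.inr (Or.inr (Or.inr (Or.inr ⟨i, by omega, by omega,
            by unfold pa pb pc; split_ifs <;> omega⟩)))

set_option maxHeartbeats 4000000 in
lemma desc_uniq {n j m k j' m' k' a b c : ℕ}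
    (h4 : 4*j ≤ m) (hn : m ≤ n) (h4' : 4*j' ≤ m') (hn' : m' ≤ n)
    (hd : Desc n j m k a b c) (hd' : Desc n j' m' k' a b c) :
    j = j' ∧ m = m' ∧ k = k' := by
  unfold Desc at hd hd'
  rcases hd with ⟨hp, hh|⟨i,hh⟩|⟨i,hh⟩|⟨i,hh⟩⟩ | ⟨hp, hp3, hh|hh|⟨i,hh⟩|⟨i,hh⟩|⟨i,hh⟩⟩ <;>
    rcases hd' with ⟨hp', hh'|⟨i',hh'⟩|⟨i',hh'⟩|⟨i',hh'⟩⟩ |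
      ⟨hp', hp3', hh'|hh'|⟨i',hh'⟩|⟨i',hh'⟩|⟨i',hh'⟩⟩ <;>
      omega

set_option maxHeartbeats 1600000 in
lemma exists_pos {n a b c : ℕ} (hcb : c ≤ b) (hba : b ≤ a) (han : a ≤ n) :
    ∃ j m k, Valid n j m ∧ k ≤ cl n j m ∧ pa j m k = a ∧ pb j m k = b ∧ pc j m k = c := by
  obtain ⟨j0, r, hr3, hX⟩ : ∃ j0 r, r < 3 ∧ a - b = 3*j0 + r :=
    ⟨(a-b)/3, (a-b)%3, by omega, by omega⟩
  have hY2 := Nat.mod_two_eq_zero_or_one (b - c)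
  interval_cases r
  · rcases le_or_gt j0 c with hc | hc
    · rcases hY2 with hY | hY
      · exact ⟨j0, 4*j0 + (b-c), (b-c) + 3*(c - j0), ⟨by omega, by omega, by omega⟩,
          by unfold cl; omega, by unfold pa; omega,
          by unfold pb; split_ifs <;> omega, by unfold pc; split_ifs <;> omega⟩
      · exact ⟨j0, 4*j0 + (b-c) - 1, (b-c) + 1 + 3*(c - j0), ⟨by omega, by omega, by omega⟩,
          by unfold cl; omega, by unfold pa; omega,
          by unfold pb; split_ifs <;> omega, by unfold pc; split_ifs <;> omega⟩
    · exact ⟨c, a, b - c, ⟨by omega, by omega, by omega⟩,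
        by unfold cl; omega, by unfold pa; omega,
        by unfold pb; split_ifs <;> omega, by unfold pc; split_ifs <;> omega⟩
  · by_cases hE : (b-c) % 2 = 0 ∧ j0 ≤ c
    · exact ⟨j0, 4*j0 + (b-c), (b-c) + 3*(c - j0) + 1, ⟨by omega, by omega, by omega⟩,
        by unfold cl; omega, by unfold pa; omega,
        by unfold pb; split_ifs <;> omega, by unfold pc; split_ifs <;> omega⟩
    · by_cases hO : (b-c) % 2 = 1 ∧ j0 + 1 ≤ c
      · exact ⟨j0, 4*j0 + (b-c) + 2, (b-c) + 3*(c - j0) - 1, ⟨by omega, by omega, by omega⟩,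
          by unfold cl; omega, by unfold pa; omega,
          by unfold pb; split_ifs <;> omega, by unfold pc; split_ifs <;> omega⟩
      · exact ⟨c, a, b - c, ⟨by omega, by omega, by omega⟩,
          by unfold cl; omega, by unfold pa; omega,
          by unfold pb; split_ifs <;> omega, by unfold pc; split_ifs <;> omega⟩
  · by_cases hO1 : (b-c) % 2 = 1 ∧ j0 + 1 ≤ c
    · exact ⟨j0, 4*j0 + (b-c) + 2, (b-c) + 3*(c - j0), ⟨by omega, by omega, by omega⟩,
        by unfold cl; omega, by unfold pa; omega,
        by unfold pb; split_ifs <;> omega, by unfold pc; split_ifs <;> omega⟩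
    · by_cases hO2 : (b-c) % 2 = 0 ∧ j0 + 2 ≤ c
      · exact ⟨j0, 4*j0 + (b-c) + 3, (b-c) + 3*(c - j0) - 1, ⟨by omega, by omega, by omega⟩,
          by unfold cl; omega, by unfold pa; omega,
          by unfold pb; split_ifs <;> omega, by unfold pc; split_ifs <;> omega⟩
      · by_cases hO3 : (b-c) % 2 = 0 ∧ c = j0 + 1
        · exact ⟨j0, 4*j0 + (b-c) + 3, (b-c) + 2, ⟨by omega, by omega, by omega⟩,
            by unfold cl; omega, by unfold pa; omega,
            by unfold pb; split_ifs <;> omega, by unfold pc; split_ifs <;> omega⟩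
        · exact ⟨c, a, b - c, ⟨by omega, by omega, by omega⟩,
            by unfold cl; omega, by unfold pa; omega,
            by unfold pb; split_ifs <;> omega, by unfold pc; split_ifs <;> omega⟩


/-! ### plumbing -/


lemma anti3 {f : Fin 3 → ℕ} (h1 : f 1 ≤ f 0) (h2 : f 2 ≤ f 1) : Antitone f := by
  intro i j hij
  fin_cases i <;> fin_cases j <;> simp_all [Fin.le_def] <;> omega

def toY (n a b c : ℕ) : YoungL 3 n :=
  ⟨![min a n, min b (min a n), min c (min b (min a n))], by
    constructor
    · apply anti3 <;> simp <;> omega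
    · intro i; fin_cases i <;> simp <;> omega⟩

lemma toY_val {n a b c : ℕ} (hcb : c ≤ b) (hba : b ≤ a) (han : a ≤ n) :
    (toY n a b c).1 0 = a ∧ (toY n a b c).1 1 = b ∧ (toY n a b c).1 2 = c := by
  refine ⟨?_, ?_, ?_⟩ <;> simp [toY] <;> omega

lemma ext3 {n : ℕ} {x y : YoungL 3 n} (h0 : x.1 0 = y.1 0) (h1 : x.1 1 = y.1 1)
    (h2 : x.1 2 = y.1 2) : x = y := by
  apply Subtype.ext; funext i; fin_cases i <;> assumption

lemma le_comp {n : ℕ} {x y : YoungL 3 n} (h0 : x.1 0 ≤ y.1 0) (h1 : x.1 1 ≤ y.1 1)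
    (h2 : x.1 2 ≤ y.1 2) : x ≤ y := by
  intro i; fin_cases i <;> assumption

lemma sum3 {n : ℕ} (x : YoungL 3 n) : ∑ i, x.1 i = x.1 0 + x.1 1 + x.1 2 :=
  Fin.sum_univ_three _

lemma comp_le {n : ℕ} {x y : YoungL 3 n} (h : x ≤ y) : ∀ i, x.1 i ≤ y.1 i := h

lemma lt_comp {n : ℕ} {x y : YoungL 3 n} (h0 : x.1 0 ≤ y.1 0) (h1 : x.1 1 ≤ y.1 1)
    (h2 : x.1 2 ≤ y.1 2) (hs : x.1 0 + x.1 1 + x.1 2 < y.1 0 + y.1 1 + y.1 2) : x < y := by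
  refine lt_of_le_of_ne (le_comp h0 h1 h2) (fun e => ?_)
  rw [e] at hs; omega

lemma sum_lt_of_lt {n : ℕ} {x y : YoungL 3 n} (h : x < y) :
    x.1 0 + x.1 1 + x.1 2 < y.1 0 + y.1 1 + y.1 2 := by
  have h0 := comp_le h.le 0; have h1 := comp_le h.le 1; have h2 := comp_le h.le 2
  by_contra hs
  exact h.ne (ext3 (by omega) (by omega) (by omega))

lemma covby_iff {n : ℕ} (x y : YoungL 3 n) :
    x ⋖ y ↔ (x.1 0 ≤ y.1 0 ∧ x.1 1 ≤ y.1 1 ∧ x.1 2 ≤ y.1 2 ∧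
      y.1 0 + y.1 1 + y.1 2 = x.1 0 + x.1 1 + x.1 2 + 1) := by
  constructor
  · intro h
    have h0 := comp_le h.le 0; have h1 := comp_le h.le 1; have h2 := comp_le h.le 2
    refine ⟨h0, h1, h2, ?_⟩
    have hlt := sum_lt_of_lt h.lt
    by_contra hsum
    -- sum gap at least 2; construct intermediate element
    have hx2 := x.2.1 (show (0:Fin 3) ≤ 1 by decide)
    have hx1 := x.2.1 (show (1:Fin 3) ≤ 2 by decide)
    have hy2 := y.2.1 (show (0:Fin 3) ≤ 1 by decide)
    have hy1 := y.2.1 (show (1:Fin 3) ≤ 2 by decide)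
    have hxn := x.2.2 0
    have hyn := y.2.2 0
    rcases lt_or_ge (x.1 2) (y.1 2) with hc | hc
    · have hv := toY_val (n := n) (show y.1 2 - 1 ≤ y.1 1 by omega) hy2 hyn
      set z := toY n (y.1 0) (y.1 1) (y.1 2 - 1) with hz
      have hxz : x < z := lt_comp (by omega) (by omega) (by omega) (by omega)
      have hzy : z < y := lt_comp (by omega) (by omega) (by omega) (by omega)
      exact h.2 hxz hzy
    · rcases lt_or_ge (x.1 1) (y.1 1) with hb | hb
      · have hv := toY_val (n := n) (show y.1 2 ≤ y.1 1 - 1 by omega)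
          (show y.1 1 - 1 ≤ y.1 0 by omega) hyn
        set z := toY n (y.1 0) (y.1 1 - 1) (y.1 2) with hz
        have hxz : x < z := lt_comp (by omega) (by omega) (by omega) (by omega)
        have hzy : z < y := lt_comp (by omega) (by omega) (by omega) (by omega)
        exact h.2 hxz hzy
      · have hv := toY_val (n := n) (show y.1 2 ≤ y.1 1 by omega)
          (show y.1 1 ≤ y.1 0 - 1 by omega) (show y.1 0 - 1 ≤ n by omega)
        set z := toY n (y.1 0 - 1) (y.1 1) (y.1 2) with hz
        have hxz : x < z := lt_comp (by omega) (by omega) (by omega) (by omega)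
        have hzy : z < y := lt_comp (by omega) (by omega) (by omega) (by omega)
        exact h.2 hxz hzy
  · rintro ⟨h0, h1, h2, hs⟩
    constructor
    · exact lt_comp h0 h1 h2 (by omega)
    · intro z hxz hzy
      have s1 := sum_lt_of_lt hxz
      have s2 := sum_lt_of_lt hzy
      omega


def chainL (n j m : ℕ) : List (YoungL 3 n) :=
  (List.range (cl n j m + 1)).map fun k => toY n (pa j m k) (pb j m k) (pc j m k)

lemma chainL_ne_nil {n j m : ℕ} : chainL n j m ≠ [] := by
  have : (chainL n j m).length = cl n j m + 1 := by simp [chainL]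
  intro h
  rw [h] at this
  simp at this

lemma mem_chainL {n j m : ℕ} {x : YoungL 3 n} :
    x ∈ chainL n j m ↔ ∃ k, k < cl n j m + 1 ∧
      toY n (pa j m k) (pb j m k) (pc j m k) = x := by
  simp [chainL, List.mem_map, List.mem_range]

lemma chainL_comp {n j m k : ℕ} (hv : Valid n j m) (hk : k ≤ cl n j m) :
    (toY n (pa j m k) (pb j m k) (pc j m k)).1 0 = pa j m k ∧
    (toY n (pa j m k) (pb j m k) (pc j m k)).1 1 = pb j m k ∧
    (toY n (pa j m k) (pb j m k) (pc j m k)).1 2 = pc j m k := by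
  obtain ⟨q1, q2, q3⟩ := pos_valid hv hk
  exact toY_val q1 q2 q3

lemma chainL_chain' {n j m : ℕ} (hv : Valid n j m) :
    (chainL n j m).Chain' (· ⋖ ·) := by
  rw [chainL, List.Chain', List.isChain_map, List.isChain_range_succ]
  intro k hk
  simp only [Nat.succ_eq_add_one]
  obtain ⟨a0, b0, c0⟩ := chainL_comp hv (show k ≤ cl n j m by omega)
  obtain ⟨a1, b1, c1⟩ := chainL_comp hv (show k+1 ≤ cl n j m by omega)
  obtain ⟨w1, w2, w3, w4⟩ := pos_cover hv (show k+1 ≤ cl n j m by omega)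
  rw [covby_iff]
  refine ⟨by omega, by omega, by omega, by omega⟩

lemma chainL_head {n j m : ℕ} (hl : chainL n j m ≠ []) :
    (chainL n j m).head hl = toY n (pa j m 0) (pb j m 0) (pc j m 0) := by
  rw [List.head_eq_getElem]
  simp [chainL]

lemma chainL_getLast {n j m : ℕ} (hl : chainL n j m ≠ []) :
    (chainL n j m).getLast hl
      = toY n (pa j m (cl n j m)) (pb j m (cl n j m)) (pc j m (cl n j m)) := by
  rw [List.getLast_eq_getElem]
  have hlen : (chainL n j m).length = cl n j m + 1 := by simp [chainL]
  simp [chainL]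

lemma chainL_sum {n j m : ℕ} (hv : Valid n j m) (hl : chainL n j m ≠ []) :
    (∑ i, ((chainL n j m).head hl).1 i) + (∑ i, ((chainL n j m).getLast hl).1 i) = 3 * n := by
  rw [chainL_head hl, chainL_getLast hl, sum3, sum3]
  obtain ⟨a0, b0, c0⟩ := chainL_comp hv (show 0 ≤ cl n j m by omega)
  obtain ⟨a1, b1, c1⟩ := chainL_comp hv (le_refl (cl n j m))
  have := pos_sym (n := n) hv
  omega

end YL3

/-- (Lindström) `L(3,n)` admits a symmetric chain decomposition: there is a set
`S` of saturated chains (nonempty lists linked by the covering relation) whose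
minimum and maximum elements `x, y` satisfy `|x| + |y| = 3n`, such that every
element of `L(3,n)` belongs to exactly one chain of `S`. -/
theorem youngL_three_n_symmetric_chain_decomposition (n : ℕ) (hn : 0 < n) :
    ∃ S : Set (List (YoungL 3 n)),
      (∀ l ∈ S, ∃ hl : l ≠ [],
        l.Chain' (· ⋖ ·) ∧
        (∑ i, (l.head hl).1 i) + (∑ i, (l.getLast hl).1 i) = 3 * n) ∧
      ∀ x : YoungL 3 n, ∃! l, l ∈ S ∧ x ∈ l := by
  classical
  refine ⟨{l | ∃ j m, YL3.Valid n j m ∧ l = YL3.chainL n j m}, ?_, ?_⟩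
  · rintro l ⟨j, m, hv, rfl⟩
    exact ⟨YL3.chainL_ne_nil, YL3.chainL_chain' hv, YL3.chainL_sum hv _⟩
  · intro x
    have hcb : x.1 2 ≤ x.1 1 := x.2.1 (show (1:Fin 3) ≤ 2 by decide)
    have hba : x.1 1 ≤ x.1 0 := x.2.1 (show (0:Fin 3) ≤ 1 by decide)
    have han : x.1 0 ≤ n := x.2.2 0
    obtain ⟨j, m, k, hv, hk, ha, hb, hc⟩ := YL3.exists_pos hcb hba han
    have hmem : x ∈ YL3.chainL n j m := by
      rw [YL3.mem_chainL]
      refine ⟨k, by omega, ?_⟩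
      obtain ⟨a0, b0, c0⟩ := YL3.chainL_comp hv hk
      exact YL3.ext3 (by omega) (by omega) (by omega)
    refine ⟨YL3.chainL n j m, ⟨⟨j, m, hv, rfl⟩, hmem⟩, ?_⟩
    rintro l' ⟨⟨j', m', hv', rfl⟩, hx'⟩
    obtain ⟨k', hk', he⟩ := YL3.mem_chainL.mp hx'
    obtain ⟨a0, b0, c0⟩ := YL3.chainL_comp hv' (show k' ≤ YL3.cl n j' m' by omega)
    have ha' : YL3.pa j' m' k' = x.1 0 := by rw [← a0, he]
    have hb' : YL3.pb j' m' k' = x.1 1 := by rw [← b0, he]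
    have hc' : YL3.pc j' m' k' = x.1 2 := by rw [← c0, he]
    have hd : YL3.Desc n j m k (x.1 0) (x.1 1) (x.1 2) := by
      have := YL3.pos_desc hv hk
      rwa [ha, hb, hc] at this
    have hd' : YL3.Desc n j' m' k' (x.1 0) (x.1 1) (x.1 2) := by
      have := YL3.pos_desc hv' (show k' ≤ YL3.cl n j' m' by omega)
      rwa [ha', hb', hc'] at this
    obtain ⟨e1, e2, _⟩ := YL3.desc_uniq hv.1 hv.2.1 hv'.1 hv'.2.1 hd hd'
    rw [← e1, ← e2]
end
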